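/- Let α = (α₁,α₂,α₃) be a real 3-vector with α₁ ≥ α₂ ≥ |α₃| and α₁ > 0, and let x ≥ 0. Then inf{ t ≥ 0 : t·α ≻_s (x,0,0) } = x/α₁, and the infimum is attained. (Interaction cost of a controlled-U gate with interaction content (x,0,0); for x = π/4 this is the interaction cost π/(4α₁) of the CNOT gate.) -/

import Mathlib

open Matrix Complex Real NormedSpace

noncomputable section

/-- Pauli matrix `σ₁`. -/
def σ1 : Matrix (Fin 2) (Fin 2) ℂ := !![0, 1; 1, 0]
/-- Pauli matrix `σ₂`. -/
def σ2 : Matrix (Fin 2) (Fin 2) ℂ := !![0, -I; I, 0]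
/-- Pauli matrix `σ₃`. -/
def σ3 : Matrix (Fin 2) (Fin 2) ℂ := !![1, 0; 0, -1]

/-- Kronecker product of two `2×2` matrices as a `4×4` matrix, with the index ordering
`|00⟩,|01⟩,|10⟩,|11⟩` (i.e. index `2*i+j` corresponds to `|i⟩⊗|j⟩`). -/
def kron (A B : Matrix (Fin 2) (Fin 2) ℂ) : Matrix (Fin 4) (Fin 4) ℂ :=
  Matrix.of fun i j =>
    A ⟨i.val / 2, by have := i.isLt; omega⟩ ⟨j.val / 2, by have := j.isLt; omega⟩ *
      B ⟨i.val % 2, by have := i.isLt; omega⟩ ⟨j.val % 2, by have := j.isLt; omega⟩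

/-- The Hamiltonian `H_α = α₁ σ₁⊗σ₁ + α₂ σ₂⊗σ₂ + α₃ σ₃⊗σ₃`. -/
def Hmat (a : Fin 3 → ℝ) : Matrix (Fin 4) (Fin 4) ℂ :=
  (a 0 : ℂ) • kron σ1 σ1 + (a 1 : ℂ) • kron σ2 σ2 + (a 2 : ℂ) • kron σ3 σ3

/-- The magic basis matrix: column `j` is the `j`-th magic basis vector, written in the
computational basis `|00⟩,|01⟩,|10⟩,|11⟩`. -/
def Mmag : Matrix (Fin 4) (Fin 4) ℂ :=
  !![0,                      1 / (Real.sqrt 2 : ℂ), -I / (Real.sqrt 2 : ℂ), 0;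
     -I / (Real.sqrt 2 : ℂ), 0,                     0,                      1 / (Real.sqrt 2 : ℂ);
     -I / (Real.sqrt 2 : ℂ), 0,                     0,                      -(1 / (Real.sqrt 2 : ℂ));
     0,                      1 / (Real.sqrt 2 : ℂ), I / (Real.sqrt 2 : ℂ),  0]

/-- `λ(α) = (α₁+α₂−α₃, α₁−α₂+α₃, −α₁+α₂+α₃, −α₁−α₂−α₃)`, the vector of eigenvalues of `H_α`
in the magic basis. -/
def lamv (a : Fin 3 → ℝ) : Fin 4 → ℝ :=
  ![a 0 + a 1 - a 2, a 0 - a 1 + a 2, -a 0 + a 1 + a 2, -a 0 - a 1 - a 2]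

/-- The s-ordered form of a real 3-vector: the absolute values rearranged in nonincreasing
order, with the third component carrying the sign of the product `v₀v₁v₂`. -/
def sOrd (v : Fin 3 → ℝ) : Fin 3 → ℝ :=
  ![max |v 0| (max |v 1| |v 2|),
    |v 0| + |v 1| + |v 2| - max |v 0| (max |v 1| |v 2|) - min |v 0| (min |v 1| |v 2|),
    if v 0 * v 1 * v 2 < 0 then -(min |v 0| (min |v 1| |v 2|))
    else min |v 0| (min |v 1| |v 2|)]

/-- `x` s-majorizes `y`, written for the s-ordered forms:
`x^s₁ ≥ y^s₁`, `x^s₁+x^s₂−x^s₃ ≥ y^s₁+y^s₂−y^s₃` and `x^s₁+x^s₂+x^s₃ ≥ y^s₁+y^s₂+y^s₃`. -/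
def sMaj (x y : Fin 3 → ℝ) : Prop :=
  sOrd y 0 ≤ sOrd x 0 ∧
    sOrd y 0 + sOrd y 1 - sOrd y 2 ≤ sOrd x 0 + sOrd x 1 - sOrd x 2 ∧
    sOrd y 0 + sOrd y 1 + sOrd y 2 ≤ sOrd x 0 + sOrd x 1 + sOrd x 2


lemma sord_eval (t : ℝ) (ht : 0 ≤ t) (a : Fin 3 → ℝ) (h1 : a 1 ≤ a 0) (h2 : |a 2| ≤ a 1) :
    sOrd (t • a) 0 = t * a 0 ∧ sOrd (t • a) 1 = t * a 1 ∧ sOrd (t • a) 2 = t * a 2 := by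
  have h1' : 0 ≤ a 1 := (abs_nonneg _).trans h2
  have h0 : 0 ≤ a 0 := h1'.trans h1
  have e0 : |t * a 0| = t * a 0 := abs_of_nonneg (mul_nonneg ht h0)
  have e1 : |t * a 1| = t * a 1 := abs_of_nonneg (mul_nonneg ht h1')
  have e2 : |t * a 2| = t * |a 2| := by rw [abs_mul, _root_.abs_of_nonneg ht]
  have hle : t * |a 2| ≤ t * a 1 := mul_le_mul_of_nonneg_left h2 ht
  have hle' : t * a 1 ≤ t * a 0 := mul_le_mul_of_nonneg_left h1 ht
  have hmax : max |t * a 0| (max |t * a 1| |t * a 2|) = t * a 0 := by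
    rw [e0, e1, e2, max_eq_left hle, max_eq_left hle']
  have hmin : min |t * a 0| (min |t * a 1| |t * a 2|) = t * |a 2| := by
    rw [e0, e1, e2, min_eq_right hle, min_eq_right (hle.trans hle')]
  refine ⟨?_, ?_, ?_⟩
  · simpa [sOrd, Pi.smul_apply, smul_eq_mul] using hmax
  · simp only [sOrd, Pi.smul_apply, smul_eq_mul, Matrix.cons_val_one, Matrix.head_cons,
      Matrix.cons_val_zero]
    rw [hmax, hmin, e0, e1, e2]; ring
  · simp only [sOrd, Pi.smul_apply, smul_eq_mul, Matrix.cons_val_two, Matrix.tail_cons,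
      Matrix.head_cons]
    rw [hmin]
    by_cases hc : (t * a 0) * (t * a 1) * (t * a 2) < 0
    · rw [if_pos hc]
      have ha2neg : a 2 < 0 := by
        by_contra hnn
        push_neg at hnn
        have : 0 ≤ t * a 0 * (t * a 1) * (t * a 2) :=
          mul_nonneg (mul_nonneg (mul_nonneg ht h0) (mul_nonneg ht h1')) (mul_nonneg ht hnn)
        linarith
      rw [abs_of_neg ha2neg]; ring
    · rw [if_neg hc]
      rcases eq_or_lt_of_le ht with h | h
      · rw [← h]; simp
      rcases eq_or_lt_of_le h1' with h1e | h1p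
      · have : a 2 = 0 := abs_nonpos_iff.mp (h2.trans h1e.ge)
        simp [this]
      · have h0p : 0 < a 0 := lt_of_lt_of_le h1p h1
        have : 0 ≤ a 2 := by
          by_contra hneg
          push_neg at hneg
          exact hc (mul_neg_of_pos_of_neg
            (mul_pos (mul_pos h h0p) (mul_pos h h1p)) (mul_neg_of_pos_of_neg h hneg))
        rw [_root_.abs_of_nonneg this]

lemma sord_x (x : ℝ) (hx : 0 ≤ x) :
    sOrd ![x, 0, 0] 0 = x ∧ sOrd ![x, 0, 0] 1 = 0 ∧ sOrd ![x, 0, 0] 2 = 0 := by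
  refine ⟨?_, ?_, ?_⟩ <;>
    simp [sOrd, _root_.abs_of_nonneg hx, max_eq_left hx, min_eq_right hx]

theorem stmt12 (α : Fin 3 → ℝ)
    (ha1 : α 1 ≤ α 0) (ha2 : |α 2| ≤ α 1) (ha0 : 0 < α 0) (x : ℝ) (hx : 0 ≤ x) :
    IsLeast { t : ℝ | 0 ≤ t ∧ sMaj (t • α) ![x, 0, 0] } (x / α 0) := by
  have key : ∀ t : ℝ, 0 ≤ t → (sMaj (t • α) ![x, 0, 0] ↔ x ≤ t * α 0) := by
    intro t ht
    obtain ⟨p0, p1, p2⟩ := sord_eval t ht α ha1 ha2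
    obtain ⟨q0, q1, q2⟩ := sord_x x hx
    rw [sMaj, p0, p1, p2, q0, q1, q2]
    constructor
    · rintro ⟨h, -, -⟩; linarith
    · intro h
      have h1' : 0 ≤ α 1 := (abs_nonneg _).trans ha2
      have hb : |α 2| ≤ α 1 := ha2
      have hb1 : -(α 1) ≤ α 2 := neg_le_of_abs_le hb
      have hb2 : α 2 ≤ α 1 := le_of_abs_le hb
      refine ⟨h, ?_, ?_⟩ <;> nlinarith [mul_nonneg ht h1']
  constructor
  · refine ⟨div_nonneg hx ha0.le, (key _ (div_nonneg hx ha0.le)).mpr ?_⟩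
    rw [div_mul_cancel₀ _ ha0.ne']
  · rintro t ⟨ht, hm⟩
    have := (key t ht).mp hm
    rw [div_le_iff₀ ha0]
    linarith
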